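/- Let l > 0 and let b : [−l, l] → ℝ be Lipschitz continuous and even. Then for every p ∈ ℝ, the variational principal eigenvalue satisfies the lower bound λ₁(p) ≥ (∫₀ˡ e^{−p b(x)} dx)⁻¹ (∫₀ˡ e^{p b(y)} dy)⁻¹. -/

import Mathlib

open MeasureTheory intervalIntegral Filter Set Topology

section Helpers

lemma lip_slope_aux {u : ℝ → ℝ} {K : NNReal} (hu : LipschitzWith K u) :
    ∀ x h : ℝ, |u (x + h) - u x| ≤ K * |h| := by
  intro x h
  have := hu.dist_le_mul (x + h) x
  simpa [Real.dist_eq, abs_sub_comm] using this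

lemma slope_tendsto_of_integral {u : ℝ → ℝ} (hc : Continuous u) (c : ℝ) :
    Tendsto (fun n : ℕ => (∫ x in c..(c + (n + 1 : ℝ)⁻¹), u x) * (n + 1 : ℝ))
      atTop (𝓝 (u c)) := by
  have hF : HasDerivAt (fun t => ∫ x in c..t, u x) (u c) c :=
    integral_hasDerivAt_right (hc.intervalIntegrable _ _)
      (hc.stronglyMeasurable.stronglyMeasurableAtFilter) hc.continuousAt
  have hslope := hasDerivAt_iff_tendsto_slope.1 hF
  have hn : Tendsto (fun n : ℕ => c + (n + 1 : ℝ)⁻¹) atTop (𝓝[≠] c) := by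
    apply tendsto_nhdsWithin_of_tendsto_nhds_of_eventually_within
    · have : Tendsto (fun n : ℕ => ((n : ℝ) + 1)⁻¹) atTop (𝓝 0) :=
        tendsto_one_div_add_atTop_nhds_zero_nat.congr (by intro n; rw [one_div])
      simpa using tendsto_const_nhds.add this
    · filter_upwards with n
      have : (0:ℝ) < ((n:ℝ) + 1)⁻¹ := by positivity
      simp only [mem_compl_iff, mem_singleton_iff]
      intro h
      nlinarith [this]
  have := hslope.comp hn
  refine this.congr fun n => ?_
  have hpos : (0:ℝ) < ((n:ℝ) + 1)⁻¹ := by positivity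
  simp only [Function.comp_apply, slope_def_field, integral_same]
  field_simp
  ring

lemma lipschitz_integral_deriv_eq_sub {u : ℝ → ℝ} {K : NNReal} (hu : LipschitzWith K u)
    {a b : ℝ} (hab : a ≤ b) : ∫ x in a..b, deriv u x = u b - u a := by
  set g : ℕ → ℝ → ℝ := fun n x => (u (x + (n + 1 : ℝ)⁻¹) - u x) * (n + 1 : ℝ) with hg
  have hc : Continuous u := hu.continuous
  -- Step A: integrals of g n tend to the integral of deriv u
  have hA : Tendsto (fun n => ∫ x in a..b, g n x) atTop (𝓝 (∫ x in a..b, deriv u x)) := by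
    rw [intervalIntegral.integral_of_le hab]
    have := MeasureTheory.tendsto_integral_of_dominated_convergence (μ := volume.restrict (Ioc a b))
      (F := g) (f := deriv u) (bound := fun _ => (K : ℝ))
      (fun n => ((hc.comp (continuous_id.add continuous_const)).sub hc |>.mul
        continuous_const).aestronglyMeasurable)
      (integrable_const _)
      (fun n => by
        filter_upwards with x
        have hb := lip_slope_aux hu x (n + 1 : ℝ)⁻¹
        have hpos : (0:ℝ) < ((n:ℝ) + 1)⁻¹ := by positivity
        rw [Real.norm_eq_abs, hg]
        simp only
        rw [abs_mul]
        have h1 : |(n:ℝ) + 1| = (n:ℝ) + 1 := abs_of_pos (by positivity)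
        rw [h1]
        rw [abs_of_pos hpos] at hb
        calc |u (x + ((n:ℝ) + 1)⁻¹) - u x| * ((n:ℝ) + 1)
            ≤ (K * ((n:ℝ) + 1)⁻¹) * ((n:ℝ) + 1) :=
              mul_le_mul_of_nonneg_right hb (by positivity)
          _ = K := by field_simp)
      ?_
    · convert this using 2
      rw [intervalIntegral.integral_of_le hab]
    · -- a.e. convergence
      have hdiff : ∀ᵐ x ∂(volume.restrict (Ioc a b)), DifferentiableAt ℝ u x :=
        ae_restrict_of_ae hu.ae_differentiableAt
      filter_upwards [hdiff] with x hx
      have hslope := hasDerivAt_iff_tendsto_slope.1 hx.hasDerivAt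
      have hn : Tendsto (fun n : ℕ => x + (n + 1 : ℝ)⁻¹) atTop (𝓝[≠] x) := by
        apply tendsto_nhdsWithin_of_tendsto_nhds_of_eventually_within
        · have : Tendsto (fun n : ℕ => ((n : ℝ) + 1)⁻¹) atTop (𝓝 0) :=
            tendsto_one_div_add_atTop_nhds_zero_nat.congr (by intro n; rw [one_div])
          simpa using tendsto_const_nhds.add this
        · filter_upwards with n
          have : (0:ℝ) < ((n:ℝ) + 1)⁻¹ := by positivity
          simp only [mem_compl_iff, mem_singleton_iff]
          intro h; nlinarith [this]
      refine (hslope.comp hn).congr fun n => ?_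
      have hpos : (0:ℝ) < ((n:ℝ) + 1)⁻¹ := by positivity
      simp only [Function.comp_apply, slope_def_field, hg]
      field_simp
      ring
  -- Step B: integrals of g n tend to u b - u a
  have hB : Tendsto (fun n => ∫ x in a..b, g n x) atTop (𝓝 (u b - u a)) := by
    have hib := slope_tendsto_of_integral hc b
    have hia := slope_tendsto_of_integral hc a
    refine (hib.sub hia).congr fun n => ?_
    have hint : ∀ c d : ℝ, IntervalIntegrable u volume c d := fun c d => hc.intervalIntegrable c d
    have key : ∫ x in a..b, g n x
        = ((∫ x in b..(b + (n + 1 : ℝ)⁻¹), u x) - ∫ x in a..(a + (n + 1 : ℝ)⁻¹), u x)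
          * (n + 1 : ℝ) := by
      have h1 : ∫ x in a..b, g n x
          = ((∫ x in a..b, u (x + (n + 1 : ℝ)⁻¹)) - ∫ x in a..b, u x) * (n + 1 : ℝ) := by
        simp only [hg]
        rw [intervalIntegral.integral_mul_const, intervalIntegral.integral_sub]
        · exact ((hc.comp (continuous_id.add continuous_const)).intervalIntegrable a b)
        · exact hint a b
      rw [h1, intervalIntegral.integral_comp_add_right]
      congr 1
      have e1 : (∫ x in (a + (n + 1 : ℝ)⁻¹)..(b + (n + 1 : ℝ)⁻¹), u x)
          = (∫ x in (a + (n + 1 : ℝ)⁻¹)..b, u x) + ∫ x in b..(b + (n + 1 : ℝ)⁻¹), u x :=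
        (intervalIntegral.integral_add_adjacent_intervals (hint _ _) (hint _ _)).symm
      have e2 : (∫ x in a..b, u x)
          = (∫ x in a..(a + (n + 1 : ℝ)⁻¹), u x) + ∫ x in (a + (n + 1 : ℝ)⁻¹)..b, u x :=
        (intervalIntegral.integral_add_adjacent_intervals (hint _ _) (hint _ _)).symm
      rw [e1, e2]; ring
    rw [key]; ring
  exact tendsto_nhds_unique hA hB

lemma integral_cauchy_schwarz (μ : Measure ℝ) (f g : ℝ → ℝ)
    (hf2 : Integrable (fun x => f x ^ 2) μ) (hg2 : Integrable (fun x => g x ^ 2) μ)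
    (hfg : Integrable (fun x => f x * g x) μ) :
    (∫ x, f x * g x ∂μ) ^ 2 ≤ (∫ x, f x ^ 2 ∂μ) * ∫ x, g x ^ 2 ∂μ := by
  set A := ∫ x, f x ^ 2 ∂μ
  set B := ∫ x, g x ^ 2 ∂μ
  set C := ∫ x, f x * g x ∂μ
  have key : ∀ t : ℝ, 0 ≤ A * (t * t) + (-2 * C) * t + B := by
    intro t
    have expand : ∀ x, (t * f x - g x) ^ 2
        = t ^ 2 * f x ^ 2 - 2 * t * (f x * g x) + g x ^ 2 := fun x => by ring
    have h1 : Integrable (fun x => t ^ 2 * f x ^ 2 - 2 * t * (f x * g x)) μ :=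
      (hf2.const_mul _).sub (hfg.const_mul _)
    have hnn : 0 ≤ ∫ x, (t * f x - g x) ^ 2 ∂μ := integral_nonneg fun x => sq_nonneg _
    have heq : ∫ x, (t * f x - g x) ^ 2 ∂μ
        = t ^ 2 * A - 2 * t * C + B := by
      simp_rw [expand]
      rw [integral_add h1 hg2, integral_sub (hf2.const_mul _) (hfg.const_mul _),
        MeasureTheory.integral_const_mul, MeasureTheory.integral_const_mul]
    rw [heq] at hnn
    nlinarith [hnn]
  have hd := discrim_le_zero key
  rw [discrim] at hd
  nlinarith [hd]

lemma integral_cauchy_schwarz' (μ : Measure ℝ) (f g F2 G2 fg : ℝ → ℝ)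
    (hF2 : ∀ x, f x ^ 2 = F2 x) (hG2 : ∀ x, g x ^ 2 = G2 x) (hfg : ∀ x, f x * g x = fg x)
    (h1 : Integrable F2 μ) (h2 : Integrable G2 μ) (h3 : Integrable fg μ) :
    (∫ x, fg x ∂μ) ^ 2 ≤ (∫ x, F2 x ∂μ) * ∫ x, G2 x ∂μ := by
  have e1 : F2 = fun x => f x ^ 2 := funext fun x => (hF2 x).symm
  have e2 : G2 = fun x => g x ^ 2 := funext fun x => (hG2 x).symm
  have e3 : fg = fun x => f x * g x := funext fun x => (hfg x).symm
  rw [e1] at h1 ⊢; rw [e2] at h2 ⊢; rw [e3] at h3 ⊢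
  exact integral_cauchy_schwarz μ f g h1 h2 h3

lemma deriv_sq_intervalIntegrable {c : ℝ → ℝ} (hc : Continuous c) {u : ℝ → ℝ} {Ku : NNReal}
    (hu : LipschitzWith Ku u) (a b : ℝ) :
    IntervalIntegrable (fun x => c x * deriv u x ^ 2) volume a b := by
  rw [intervalIntegrable_iff]
  obtain ⟨M, hM⟩ := isCompact_uIcc.exists_bound_of_continuousOn (s := uIcc a b) hc.continuousOn
  refine Measure.integrableOn_of_bounded (M := M * (Ku : ℝ) ^ 2) measure_Ioc_lt_top.ne
    ((hc.measurable.mul ((measurable_deriv u).pow_const 2)).aestronglyMeasurable) ?_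
  rw [ae_restrict_iff' measurableSet_uIoc]
  filter_upwards with x hx
  have h1 : ‖c x‖ ≤ M := hM x (uIoc_subset_uIcc hx)
  have h2 : |deriv u x| ≤ (Ku : ℝ) := by
    simpa [Real.norm_eq_abs] using norm_deriv_le_of_lipschitz (𝕜 := ℝ) hu (x₀ := x)
  have h3 : deriv u x ^ 2 ≤ (Ku : ℝ) ^ 2 := by
    rw [← sq_abs]
    exact pow_le_pow_left₀ (abs_nonneg _) h2 2
  rw [Real.norm_eq_abs, abs_mul, abs_of_nonneg (sq_nonneg (deriv u x))]
  have hM0 : 0 ≤ M := (norm_nonneg _).trans (hM a left_mem_uIcc)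
  calc |c x| * deriv u x ^ 2 ≤ M * (Ku : ℝ) ^ 2 := by
        apply mul_le_mul (by rwa [Real.norm_eq_abs] at h1) h3 (sq_nonneg _) hM0

lemma deriv_intervalIntegrable {u : ℝ → ℝ} {Ku : NNReal}
    (hu : LipschitzWith Ku u) (a b : ℝ) :
    IntervalIntegrable (fun x => deriv u x) volume a b := by
  rw [intervalIntegrable_iff]
  refine Measure.integrableOn_of_bounded (M := (Ku : ℝ)) measure_Ioc_lt_top.ne
    (measurable_deriv u).aestronglyMeasurable ?_
  filter_upwards with x
  exact norm_deriv_le_of_lipschitz (𝕜 := ℝ) hu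

lemma interval_cs {B : ℝ → ℝ} (hB : Continuous B) (p : ℝ) {u : ℝ → ℝ} {Ku : NNReal}
    (hu : LipschitzWith Ku u) {a c : ℝ} (hac : a ≤ c) :
    (∫ x in a..c, deriv u x) ^ 2 ≤
      (∫ x in a..c, Real.exp (p * B x)) * ∫ x in a..c, Real.exp (-p * B x) * deriv u x ^ 2 := by
  have hE : Continuous fun x => Real.exp (-p * B x) :=
    Real.continuous_exp.comp (((continuous_const : Continuous fun _ : ℝ => p).mul hB).neg.congr (fun x => by simp [neg_mul]))
  have hF : Continuous fun x => Real.exp (p * B x) :=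
    Real.continuous_exp.comp (continuous_const.mul hB)
  have h2 : Integrable (fun x => Real.exp (-p * B x) * deriv u x ^ 2)
      (volume.restrict (Set.Ioc a c)) := by
    exact (deriv_sq_intervalIntegrable hE hu a c).1
  have h3 : Integrable (fun x => deriv u x) (volume.restrict (Set.Ioc a c)) := by
    exact (deriv_intervalIntegrable hu a c).1
  have h1 : Integrable (fun x => Real.exp (p * B x)) (volume.restrict (Set.Ioc a c)) :=
    hF.integrableOn_Ioc
  rw [intervalIntegral.integral_of_le hac, intervalIntegral.integral_of_le hac,
    intervalIntegral.integral_of_le hac]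
  refine integral_cauchy_schwarz' _ (fun x => Real.exp (p * B x / 2))
    (fun x => Real.exp (-(p * B x) / 2) * deriv u x) _ _ _ ?_ ?_ ?_ h1 h2 h3
  · intro x; rw [sq, ← Real.exp_add]; ring_nf
  · intro x; rw [mul_pow, sq (Real.exp _), ← Real.exp_add]; ring_nf
  · intro x; rw [← mul_assoc, ← Real.exp_add]; ring_nf; rw [Real.exp_zero, one_mul]

end Helpers


/-- The variational principal eigenvalue `λ₁(p)` of the one-dimensional drift operator
`-u'' + p b' u'` on `(-l, l)` with Dirichlet boundary conditions: the infimum of the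
weighted Rayleigh quotient over nonzero Lipschitz functions vanishing at `±l`. -/
noncomputable def lam1d (l : ℝ) (b : ℝ → ℝ) (p : ℝ) : ℝ :=
  sInf { r | ∃ u : ℝ → ℝ, (∃ K, LipschitzWith K u) ∧ u (-l) = 0 ∧ u l = 0 ∧
    (∃ x ∈ Set.Icc (-l) l, u x ≠ 0) ∧
    r = (∫ x in (-l)..l, Real.exp (-p * b x) * deriv u x ^ 2) /
        (∫ x in (-l)..l, Real.exp (-p * b x) * u x ^ 2) }

theorem principal_eigenvalue_lower_bound_1d (l : ℝ) (hl : 0 < l)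
    (b : ℝ → ℝ) (K : NNReal) (hb : LipschitzOnWith K b (Set.Icc (-l) l))
    (hbeven : ∀ x ∈ Set.Icc (-l) l, b (-x) = b x) (p : ℝ) :
    (∫ x in (0:ℝ)..l, Real.exp (-p * b x))⁻¹ *
      (∫ y in (0:ℝ)..l, Real.exp (p * b y))⁻¹ ≤ lam1d l b p := by
  classical
  obtain ⟨B, hBlip, hBeq⟩ := hb.extend_real
  have hBcont : Continuous B := hBlip.continuous
  set E : ℝ → ℝ := fun x => Real.exp (-p * B x) with hEdef
  set F : ℝ → ℝ := fun x => Real.exp (p * B x) with hFdef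
  have hE : Continuous E := Real.continuous_exp.comp (continuous_const.mul hBcont)
  have hF : Continuous F := Real.continuous_exp.comp (continuous_const.mul hBcont)
  have hEpos : ∀ x, 0 < E x := fun x => Real.exp_pos _
  have hFpos : ∀ x, 0 < F x := fun x => Real.exp_pos _
  have hBev : ∀ x ∈ Set.Icc (0:ℝ) l, B (-x) = B x := by
    intro x hx
    have hx1 : x ∈ Set.Icc (-l) l := ⟨by linarith [hx.1], hx.2⟩
    have hx2 : -x ∈ Set.Icc (-l) l := ⟨by linarith [hx.2], by linarith [hx.1]⟩
    rw [← hBeq hx2, ← hBeq hx1, hbeven x hx1]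
  have hA_eq : (∫ y in (0:ℝ)..l, Real.exp (p * b y)) = ∫ y in (0:ℝ)..l, F y := by
    apply intervalIntegral.integral_congr
    intro x hx
    rw [Set.uIcc_of_le hl.le] at hx
    simp only [hFdef]
    rw [hBeq ⟨by linarith [hx.1], hx.2⟩]
  have hBq_eq : (∫ x in (0:ℝ)..l, Real.exp (-p * b x)) = ∫ y in (0:ℝ)..l, E y := by
    apply intervalIntegral.integral_congr
    intro x hx
    rw [Set.uIcc_of_le hl.le] at hx
    simp only [hEdef]
    rw [hBeq ⟨by linarith [hx.1], hx.2⟩]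
  rw [hA_eq, hBq_eq]
  set A : ℝ := ∫ y in (0:ℝ)..l, F y with hAdef
  set Bq : ℝ := ∫ y in (0:ℝ)..l, E y with hBqdef
  have hApos : 0 < A := intervalIntegral.intervalIntegral_pos_of_pos_on
    (hF.intervalIntegrable _ _) (fun x _ => hFpos x) hl
  have hBqpos : 0 < Bq := intervalIntegral.intervalIntegral_pos_of_pos_on
    (hE.intervalIntegrable _ _) (fun x _ => hEpos x) hl
  unfold lam1d
  apply le_csInf
  · -- nonempty
    refine ⟨_, fun x => l - |x|, ⟨0 + 1, ?_⟩, by simp [abs_of_pos hl], by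
      simp [abs_of_pos hl], ⟨0, ⟨by constructor <;> linarith, by simp [hl.ne']⟩⟩, rfl⟩
    exact (LipschitzWith.const l).sub (lipschitzWith_one_norm (E := ℝ))
  · rintro r ⟨u, ⟨Ku, hu⟩, hul, hur, ⟨x₀, hx₀mem, hx₀⟩, rfl⟩
    have hucont : Continuous u := hu.continuous
    have hll : (-l : ℝ) ≤ l := by linarith
    have hDeq : (∫ x in (-l)..l, Real.exp (-p * b x) * deriv u x ^ 2)
        = ∫ x in (-l)..l, E x * deriv u x ^ 2 := by
      apply intervalIntegral.integral_congr
      intro x hx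
      rw [Set.uIcc_of_le hll] at hx
      simp only [hEdef]
      rw [hBeq hx]
    have hNeq : (∫ x in (-l)..l, Real.exp (-p * b x) * u x ^ 2)
        = ∫ x in (-l)..l, E x * u x ^ 2 := by
      apply intervalIntegral.integral_congr
      intro x hx
      rw [Set.uIcc_of_le hll] at hx
      simp only [hEdef]
      rw [hBeq hx]
    rw [hDeq, hNeq]
    set Dm : ℝ := ∫ x in (-l)..(0:ℝ), E x * deriv u x ^ 2 with hDmdef
    set Dp : ℝ := ∫ x in (0:ℝ)..l, E x * deriv u x ^ 2 with hDpdef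
    set D : ℝ := ∫ x in (-l)..l, E x * deriv u x ^ 2 with hDdef
    set N : ℝ := ∫ x in (-l)..l, E x * u x ^ 2 with hNdef
    have hEv2 : ∀ a c : ℝ, IntervalIntegrable (fun x => E x * deriv u x ^ 2) volume a c :=
      deriv_sq_intervalIntegrable hE hu
    have hftc : ∀ a c : ℝ, a ≤ c → (∫ x in a..c, deriv u x) = u c - u a :=
      fun a c h => lipschitz_integral_deriv_eq_sub hu h
    -- even reflections
    have hFm : (∫ x in (-l)..(0:ℝ), F x) = A := by
      have h1 : (∫ x in (0:ℝ)..l, F (-x)) = ∫ x in (-l)..(0:ℝ), F x := by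
        simpa using intervalIntegral.integral_comp_neg (a := (0:ℝ)) (b := l) F
      rw [← h1, hAdef]
      apply intervalIntegral.integral_congr
      intro x hx
      rw [Set.uIcc_of_le hl.le] at hx
      simp only [hFdef]
      rw [hBev x hx]
    have hEm : (∫ x in (-l)..(0:ℝ), E x) = Bq := by
      have h1 : (∫ x in (0:ℝ)..l, E (-x)) = ∫ x in (-l)..(0:ℝ), E x := by
        simpa using intervalIntegral.integral_comp_neg (a := (0:ℝ)) (b := l) E
      rw [← h1, hBqdef]
      apply intervalIntegral.integral_congr
      intro x hx
      rw [Set.uIcc_of_le hl.le] at hx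
      simp only [hEdef]
      rw [hBev x hx]
    have hDmnn : 0 ≤ Dm := intervalIntegral.integral_nonneg (by linarith)
      (fun x _ => mul_nonneg (hEpos x).le (sq_nonneg _))
    have hDpnn : 0 ≤ Dp := intervalIntegral.integral_nonneg hl.le
      (fun x _ => mul_nonneg (hEpos x).le (sq_nonneg _))
    -- pointwise bounds
    have hbound_plus : ∀ x ∈ Set.Icc (0:ℝ) l, u x ^ 2 ≤ A * Dp := by
      intro x hx
      have h2 : u x ^ 2 = (∫ t in x..l, deriv u t) ^ 2 := by
        rw [hftc x l hx.2, hur]; ring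
      have h3 := interval_cs hBcont p hu hx.2
      have h4 : (∫ t in x..l, F t) ≤ A :=
        intervalIntegral.integral_mono_interval hx.1 hx.2 le_rfl
          (Filter.Eventually.of_forall fun t => (hFpos t).le) (hF.intervalIntegrable _ _)
      have h5 : (∫ t in x..l, E t * deriv u t ^ 2) ≤ Dp :=
        intervalIntegral.integral_mono_interval hx.1 hx.2 le_rfl
          (Filter.Eventually.of_forall fun t => mul_nonneg (hEpos t).le (sq_nonneg _))
          (hEv2 _ _)
      have h6 : 0 ≤ ∫ t in x..l, E t * deriv u t ^ 2 :=
        intervalIntegral.integral_nonneg hx.2 (fun t _ => mul_nonneg (hEpos t).le (sq_nonneg _))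
      have h7 : 0 ≤ ∫ t in x..l, F t :=
        intervalIntegral.integral_nonneg hx.2 (fun t _ => (hFpos t).le)
      calc u x ^ 2 = (∫ t in x..l, deriv u t) ^ 2 := h2
        _ ≤ (∫ t in x..l, F t) * ∫ t in x..l, E t * deriv u t ^ 2 := h3
        _ ≤ A * Dp := mul_le_mul h4 h5 h6 hApos.le
    have hbound_minus : ∀ x ∈ Set.Icc (-l) (0:ℝ), u x ^ 2 ≤ A * Dm := by
      intro x hx
      have h2 : u x ^ 2 = (∫ t in (-l)..x, deriv u t) ^ 2 := by
        rw [hftc (-l) x hx.1, hul]; ring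
      have h3 := interval_cs hBcont p hu hx.1
      have h4 : (∫ t in (-l)..x, F t) ≤ A := by
        rw [← hFm]
        exact intervalIntegral.integral_mono_interval le_rfl hx.1 hx.2
          (Filter.Eventually.of_forall fun t => (hFpos t).le) (hF.intervalIntegrable _ _)
      have h5 : (∫ t in (-l)..x, E t * deriv u t ^ 2) ≤ Dm :=
        intervalIntegral.integral_mono_interval le_rfl hx.1 hx.2
          (Filter.Eventually.of_forall fun t => mul_nonneg (hEpos t).le (sq_nonneg _))
          (hEv2 _ _)
      have h6 : 0 ≤ ∫ t in (-l)..x, E t * deriv u t ^ 2 :=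
        intervalIntegral.integral_nonneg hx.1 (fun t _ => mul_nonneg (hEpos t).le (sq_nonneg _))
      have h7 : 0 ≤ ∫ t in (-l)..x, F t :=
        intervalIntegral.integral_nonneg hx.1 (fun t _ => (hFpos t).le)
      calc u x ^ 2 = (∫ t in (-l)..x, deriv u t) ^ 2 := h2
        _ ≤ (∫ t in (-l)..x, F t) * ∫ t in (-l)..x, E t * deriv u t ^ 2 := h3
        _ ≤ A * Dm := mul_le_mul h4 h5 h6 hApos.le
    -- integral bounds on the two halves
    have hiu2 : ∀ a c : ℝ, IntervalIntegrable (fun x => E x * u x ^ 2) volume a c :=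
      fun a c => (hE.mul (hucont.pow 2)).intervalIntegrable a c
    have hNp : (∫ x in (0:ℝ)..l, E x * u x ^ 2) ≤ Bq * (A * Dp) := by
      calc (∫ x in (0:ℝ)..l, E x * u x ^ 2)
          ≤ ∫ x in (0:ℝ)..l, E x * (A * Dp) :=
            intervalIntegral.integral_mono_on hl.le (hiu2 _ _)
              ((hE.mul continuous_const).intervalIntegrable _ _)
              (fun x hx => mul_le_mul_of_nonneg_left (hbound_plus x hx) (hEpos x).le)
        _ = Bq * (A * Dp) := by rw [intervalIntegral.integral_mul_const]
    have hNm : (∫ x in (-l)..(0:ℝ), E x * u x ^ 2) ≤ Bq * (A * Dm) := by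
      calc (∫ x in (-l)..(0:ℝ), E x * u x ^ 2)
          ≤ ∫ x in (-l)..(0:ℝ), E x * (A * Dm) :=
            intervalIntegral.integral_mono_on (by linarith) (hiu2 _ _)
              ((hE.mul continuous_const).intervalIntegrable _ _)
              (fun x hx => mul_le_mul_of_nonneg_left (hbound_minus x hx) (hEpos x).le)
        _ = Bq * (A * Dm) := by rw [intervalIntegral.integral_mul_const, hEm]
    have hDsplit : D = Dm + Dp := by
      rw [hDdef, hDmdef, hDpdef,
        intervalIntegral.integral_add_adjacent_intervals (hEv2 (-l) 0) (hEv2 0 l)]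
    have hNsplit : N = (∫ x in (-l)..(0:ℝ), E x * u x ^ 2) + ∫ x in (0:ℝ)..l, E x * u x ^ 2 := by
      rw [hNdef, intervalIntegral.integral_add_adjacent_intervals (hiu2 (-l) 0) (hiu2 0 l)]
    have hNpos : 0 < N := by
      apply intervalIntegral.integral_pos (by linarith)
        ((hE.mul (hucont.pow 2)).continuousOn)
        (fun x _ => mul_nonneg (hEpos x).le (sq_nonneg _))
      exact ⟨x₀, hx₀mem, mul_pos (hEpos x₀)
        (lt_of_le_of_ne (sq_nonneg _) (Ne.symm (pow_ne_zero 2 hx₀)))⟩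
    have hNleD : N ≤ Bq * A * D := by
      rw [hNsplit, hDsplit]
      have : Bq * (A * Dm) + Bq * (A * Dp) = Bq * A * (Dm + Dp) := by ring
      linarith [hNm, hNp]
    rw [le_div_iff₀ hNpos]
    calc Bq⁻¹ * A⁻¹ * N ≤ Bq⁻¹ * A⁻¹ * (Bq * A * D) := by
          apply mul_le_mul_of_nonneg_left hNleD (by positivity)
      _ = D := by field_simp
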